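/- Let A be a ℚ-vector space and n ≥ 2. Every μ ∈ 𝓜_n(A) is a polynomial of degree at most n in additive functionals: there exist Φ_j ∈ Σ_j(A) for j = 1, …, n such that μ(x) = Σ_{j=1}^{n} Φ_j(x, …, x) for all x ∈ A (the j = 1 term being an additive map A → ℂ), and these homogeneous components Φ_j are uniquely determined by μ. -/

import Mathlib

open Finset

/-- The `k`-th interference functional of `μ`:
`I^μ_k(a₁,…,a_k) = Σ_S (−1)^{k−|S|} μ(Σ_{i∈S} a_i)`, where `S` ranges over
non-empty subsets of `{1,…,k}`. -/
noncomputable def interference {A : Type*} [AddCommGroup A] (μ : A → ℂ) {k : ℕ}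
    (a : Fin k → A) : ℂ :=
  ∑ S ∈ (Finset.univ : Finset (Fin k)).powerset.filter (fun S => S.Nonempty),
    (-1 : ℂ) ^ (k - S.card) * μ (∑ i ∈ S, a i)

/-- `μ ∈ 𝓜_n(A)`: the order-`n` sum rule
`μ(a₁+⋯+a_{n+1}) = Σ_S (−1)^{n−|S|} μ(Σ_{i∈S} a_i)`, with `S` running over the
subsets of `{1,…,n+1}` satisfying `1 ≤ |S| ≤ n`. -/
def MemMeasureSpace {A : Type*} [AddCommGroup A] (n : ℕ) (μ : A → ℂ) : Prop :=
  ∀ a : Fin (n + 1) → A,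
    μ (∑ i, a i) =
      ∑ S ∈ (Finset.univ : Finset (Fin (n + 1))).powerset.filter
          (fun S => S.Nonempty ∧ S.card ≤ n),
        (-1 : ℂ) ^ (n - S.card) * μ (∑ i ∈ S, a i)

/-- Total symmetry of a functional of `n` arguments. -/
def IsTotallySymmetric {A : Type*} {n : ℕ} (Φ : (Fin n → A) → ℂ) : Prop :=
  ∀ (σ : Equiv.Perm (Fin n)) (a : Fin n → A), Φ (a ∘ σ) = Φ a

/-- Additivity in each argument of a functional of `n` arguments. -/
def IsMultiadditive {A : Type*} [AddCommGroup A] {n : ℕ} (Φ : (Fin n → A) → ℂ) : Prop :=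
  ∀ (i : Fin n) (a : Fin n → A) (x y : A),
    Φ (Function.update a i (x + y)) =
      Φ (Function.update a i x) + Φ (Function.update a i y)

/-- The polarization map
`Π_n(μ)(a₁,…,a_n) = (1/(2ⁿ n!)) Σ_{z∈{1,−1}ⁿ} z₁⋯z_n · μ(z₁a₁+⋯+z_n a_n)`,
the sum running over all sign choices `z ∈ {1,−1}ⁿ`. -/
noncomputable def polarization {A : Type*} [AddCommGroup A] (μ : A → ℂ) {n : ℕ}
    (a : Fin n → A) : ℂ :=
  (1 / (2 ^ n * n.factorial : ℂ)) *
    ∑ z : Fin n → Bool,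
      (∏ i, if z i then (1 : ℂ) else -1) * μ (∑ i, if z i then a i else -a i)

set_option linter.unusedSectionVars false

namespace QMaux
variable {A : Type*} [AddCommGroup A]

noncomputable def Dd (μ : A → ℂ) {k : ℕ} (a : Fin k → A) : ℂ :=
  ∑ S ∈ (Finset.univ : Finset (Fin k)).powerset,
    (-1 : ℂ) ^ (k - S.card) * μ (∑ i ∈ S, a i)

lemma neg_one_pow_nat_sub (a b : ℕ) (h : b ≤ a) :
    ((-1:ℂ))^(a-b) = (-1)^a * (-1)^b := by
  have h2 : a - b + 2*b = a + b := by omega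
  have : ((-1:ℂ))^(a-b) = ((-1:ℂ))^(a-b) * (((-1:ℂ))^2)^b := by norm_num
  rw [this, ← pow_mul, ← pow_add, h2, pow_add]

lemma sum_powerset_map {α β : Type*} (e : α ↪ β) (s : Finset α) (f : Finset β → ℂ) :
    ∑ T ∈ (s.map e).powerset, f T = ∑ T ∈ s.powerset, f (T.map e) := by
  refine (Finset.sum_bij (fun T _ => T.map e) ?_ ?_ ?_ ?_).symm
  · intro T hT; rw [Finset.mem_powerset] at *; exact Finset.map_subset_map.2 hT
  · intro T1 h1 T2 h2 h; exact Finset.map_injective e h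
  · intro S hS
    rw [Finset.mem_powerset, Finset.subset_map_iff] at hS
    obtain ⟨u, hu, rfl⟩ := hS
    exact ⟨u, Finset.mem_powerset.2 hu, rfl⟩
  · intro T hT; rfl

lemma Dd_add (f g : A → ℂ) {k : ℕ} (a : Fin k → A) :
    Dd (fun x => f x + g x) a = Dd f a + Dd g a := by
  simp [Dd, mul_add, Finset.sum_add_distrib]

lemma Dd_sub (f g : A → ℂ) {k : ℕ} (a : Fin k → A) :
    Dd (fun x => f x - g x) a = Dd f a - Dd g a := by
  simp [Dd, mul_sub, Finset.sum_sub_distrib]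

lemma Dd_perm (μ : A → ℂ) {k : ℕ} (σ : Equiv.Perm (Fin k)) (a : Fin k → A) :
    Dd μ (a ∘ σ) = Dd μ a := by
  unfold Dd
  refine Finset.sum_bij (fun S _ => S.image σ) ?_ ?_ ?_ ?_
  · intro S hS; simp [Finset.mem_powerset, Finset.subset_univ]
  · intro S1 h1 S2 h2 h; exact Finset.image_injective σ.injective h
  · intro S hS
    refine ⟨S.image σ.symm, by simp, ?_⟩
    simp only [Finset.image_image]
    simp
  · intro S hS
    rw [Finset.card_image_of_injective _ σ.injective,
      Finset.sum_image (fun i _ j _ h => σ.injective h)]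
    rfl

lemma Dd_snoc (μ : A → ℂ) {k : ℕ} (c : Fin k → A) (b : A) :
    Dd μ (Fin.snoc c b) = Dd (fun x => μ (b + x) - μ x) c := by
  unfold Dd
  rw [Fin.univ_castSuccEmb, Finset.cons_eq_insert,
    Finset.sum_powerset_insert (by simp [Fin.ext_iff]; exact fun x => Nat.ne_of_lt x.isLt), sum_powerset_map, sum_powerset_map,
    ← Finset.sum_add_distrib]
  refine Finset.sum_congr rfl ?_
  intro T hT
  have hTk : T.card ≤ k := by
    have := Finset.card_le_card (Finset.mem_powerset.1 hT)
    simpa using this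
  have hlast : Fin.last k ∉ T.map Fin.castSuccEmb := by
    simp [Fin.ext_iff]
    exact fun j _ => Nat.ne_of_lt j.isLt
  have hsum : ∑ i ∈ T.map Fin.castSuccEmb, Fin.snoc c b i = ∑ j ∈ T, c j := by
    rw [Finset.sum_map]
    refine Finset.sum_congr rfl fun j _ => ?_
    exact Fin.snoc_castSucc (α := fun _ => A) b c j
  have hcard : (T.map Fin.castSuccEmb).card = T.card := Finset.card_map _
  have hcard2 : (insert (Fin.last k) (T.map Fin.castSuccEmb)).card = T.card + 1 := by
    rw [Finset.card_insert_of_notMem hlast, hcard]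
  have hsum2 : ∑ i ∈ insert (Fin.last k) (T.map Fin.castSuccEmb), Fin.snoc c b i
      = b + ∑ j ∈ T, c j := by
    rw [Finset.sum_insert hlast, hsum]
    simp
  rw [hcard, hcard2, hsum, hsum2]
  have hexp : k + 1 - T.card = (k - T.card) + 1 := by omega
  have hexp2 : k + 1 - (T.card + 1) = k - T.card := by omega
  rw [hexp, hexp2, pow_succ]
  ring

lemma powerset_split (n : ℕ) :
    ((univ : Finset (Fin (n+1))).powerset) =
      insert univ (insert ∅ ((univ : Finset (Fin (n+1))).powerset.filter
        (fun S => S.Nonempty ∧ S.card ≤ n))) := by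
  ext S
  simp only [mem_powerset, mem_insert, mem_filter]
  constructor
  · intro h
    by_cases h1 : S = univ
    · exact Or.inl h1
    right
    by_cases h2 : S = ∅
    · exact Or.inl h2
    right
    refine ⟨h, Finset.nonempty_iff_ne_empty.2 h2, ?_⟩
    have hcard := Finset.card_lt_card (Finset.ssubset_univ_iff.2 h1)
    rw [Finset.card_univ, Fintype.card_fin] at hcard
    omega
  · rintro (rfl | rfl | hS)
    · exact subset_refl _
    · exact Finset.empty_subset _
    · exact hS.1

lemma univ_not_mem (n : ℕ) :
    (univ : Finset (Fin (n+1))) ∉ insert (∅ : Finset (Fin (n+1)))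
      ((univ : Finset (Fin (n+1))).powerset.filter
        (fun S => S.Nonempty ∧ S.card ≤ n)) := by
  simp only [mem_insert, mem_filter]
  rintro (h | ⟨-, -, h⟩)
  · exact (Finset.univ_nonempty).ne_empty h
  · rw [Finset.card_univ, Fintype.card_fin] at h; omega

lemma empty_not_mem (n : ℕ) :
    (∅ : Finset (Fin (n+1))) ∉ (univ : Finset (Fin (n+1))).powerset.filter
        (fun S => S.Nonempty ∧ S.card ≤ n) := by
  simp [Finset.nonempty_iff_ne_empty]

lemma sum_pow_card (n : ℕ) :
    ∑ S ∈ (univ : Finset (Fin (n+1))).powerset.filter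
        (fun S => S.Nonempty ∧ S.card ≤ n), ((-1:ℂ))^(S.card)
      = (-1)^n - 1 := by
  have h0 : ∑ S ∈ (univ : Finset (Fin (n+1))).powerset, ((-1:ℂ))^(S.card) = 0 := by
    have := Finset.sum_powerset_neg_one_pow_card (α := Fin (n+1)) (x := univ)
    rw [if_neg (Finset.univ_nonempty).ne_empty] at this
    have h2 := congrArg (fun z : ℤ => (z : ℂ)) this
    push_cast at h2
    simpa using h2
  rw [powerset_split n, Finset.sum_insert (univ_not_mem n),
    Finset.sum_insert (empty_not_mem n)] at h0
  rw [Finset.card_univ, Fintype.card_fin, Finset.card_empty, pow_zero, pow_succ] at h0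
  linear_combination h0

lemma memA {n : ℕ} {μ : A → ℂ} (hμ : MemMeasureSpace n μ) : μ 0 = 0 := by
  have h := hμ (fun _ => 0)
  simp only [Finset.sum_const_zero] at h
  have hrw : ∀ S ∈ (univ : Finset (Fin (n+1))).powerset.filter
      (fun S => S.Nonempty ∧ S.card ≤ n),
      (-1 : ℂ) ^ (n - S.card) * μ 0 = (-1:ℂ)^n * ((-1:ℂ)^S.card * μ 0) := by
    intro S hS
    rw [Finset.mem_filter] at hS
    rw [neg_one_pow_nat_sub n S.card hS.2.2]
    ring
  rw [Finset.sum_congr rfl hrw, ← Finset.mul_sum, ← Finset.sum_mul, sum_pow_card n] at h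
  have hX : ((-1:ℂ)^n) * ((-1:ℂ)^n) = 1 := by
    rw [← pow_add]; exact Even.neg_one_pow ⟨n, rfl⟩
  have h2 : ((-1:ℂ)^n) * μ 0 = 0 := by linear_combination h + μ 0 * hX
  have h3 : ((-1:ℂ)^n) ≠ 0 := pow_ne_zero _ (by norm_num)
  exact (mul_eq_zero.1 h2).resolve_left h3

lemma memB {n : ℕ} {μ : A → ℂ} (hμ : MemMeasureSpace n μ) (a : Fin (n+1) → A) :
    Dd μ a = 0 := by
  have h0 : μ 0 = 0 := memA hμ
  have h := hμ a
  unfold Dd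
  rw [powerset_split n, Finset.sum_insert (univ_not_mem n),
    Finset.sum_insert (empty_not_mem n)]
  rw [Finset.card_univ, Fintype.card_fin, Finset.card_empty]
  simp only [Nat.sub_self, pow_zero, one_mul, Finset.sum_empty, h0, mul_zero, add_zero]
  have hrw : ∀ S ∈ (univ : Finset (Fin (n+1))).powerset.filter
      (fun S => S.Nonempty ∧ S.card ≤ n),
      (-1 : ℂ) ^ (n + 1 - S.card) * μ (∑ i ∈ S, a i)
        = -((-1:ℂ)^(n - S.card) * μ (∑ i ∈ S, a i)) := by
    intro S hS
    rw [Finset.mem_filter] at hS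
    have : n + 1 - S.card = (n - S.card) + 1 := by omega
    rw [this, pow_succ]
    ring
  rw [Finset.sum_congr rfl hrw, Finset.sum_neg_distrib, ← h]
  ring

lemma Dd_delta_add (μ : A → ℂ) {k : ℕ} (c : Fin k → A) (x y : A)
    (hz : ∀ b : Fin (k+2) → A, Dd μ b = 0) :
    Dd (fun t => μ ((x+y) + t) - μ t) c
      = Dd (fun t => μ (x + t) - μ t) c + Dd (fun t => μ (y + t) - μ t) c := by
  have e0 : (fun t => μ ((x+y) + t) - μ t)
      = (fun t => (μ (x + t) - μ t) + ((μ (y + t) - μ t)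
          + ((μ (x + (y + t)) - μ (y + t)) - (μ (x + t) - μ t)))) := by
    funext t
    rw [show (x + y) + t = x + (y + t) from add_assoc x y t]
    ring
  have e1 : Dd (fun t => μ ((x+y) + t) - μ t) c
      = Dd (fun t => (μ (x + t) - μ t) + ((μ (y + t) - μ t)
          + ((μ (x + (y + t)) - μ (y + t)) - (μ (x + t) - μ t)))) c :=
    congrArg (fun f : A → ℂ => Dd f c) e0
  have e2 := Dd_add (fun t => μ (x + t) - μ t)
    (fun t => (μ (y + t) - μ t) + ((μ (x + (y + t)) - μ (y + t)) - (μ (x + t) - μ t))) c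
  have e3 := Dd_add (fun t => μ (y + t) - μ t)
    (fun t => (μ (x + (y + t)) - μ (y + t)) - (μ (x + t) - μ t)) c
  have e4 : Dd (fun t => (μ (x + (y + t)) - μ (y + t)) - (μ (x + t) - μ t)) c
      = Dd (fun s => μ (x + s) - μ s) (Fin.snoc c y) :=
    (Dd_snoc (fun s => μ (x + s) - μ s) c y).symm
  have e5 : Dd (fun s => μ (x + s) - μ s) (Fin.snoc c y)
      = Dd μ (Fin.snoc (Fin.snoc c y) x) := (Dd_snoc μ (Fin.snoc c y) x).symm
  have e6 : Dd μ (Fin.snoc (Fin.snoc c y) x) = 0 := hz _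
  rw [e1, e2, e3, e4, e5, e6, add_zero]

lemma Dd_multiadd {k : ℕ} (μ : A → ℂ) (hz : ∀ b : Fin (k+2) → A, Dd μ b = 0) :
    IsMultiadditive (fun a : Fin (k+1) → A => Dd μ a) := by
  intro i a x y
  have move : ∀ v : A, Dd μ (Function.update a i v)
      = Dd μ (Fin.snoc (fun j : Fin k => a (Equiv.swap i (Fin.last k) j.castSucc)) v) := by
    intro v
    rw [← Dd_perm μ (Equiv.swap i (Fin.last k)) (Function.update a i v)]
    congr 1
    funext j
    refine Fin.lastCases ?_ ?_ j
    · have h1 : Equiv.swap i (Fin.last k) (Fin.last k) = i :=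
        Equiv.swap_apply_right i (Fin.last k)
      simp only [Function.comp_apply, Fin.snoc_last]
      rw [h1, Function.update_self]
    · intro j'
      have hne : Equiv.swap i (Fin.last k) j'.castSucc ≠ i := by
        intro hc
        have h2 : Equiv.swap i (Fin.last k) j'.castSucc
            = Equiv.swap i (Fin.last k) (Fin.last k) := by
          rw [hc, Equiv.swap_apply_right]
        have := (Equiv.swap i (Fin.last k)).injective h2
        exact (Fin.castSucc_lt_last j').ne this
      simp only [Function.comp_apply, Fin.snoc_castSucc]
      exact Function.update_of_ne hne v a
  show Dd μ (Function.update a i (x + y))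
      = Dd μ (Function.update a i x) + Dd μ (Function.update a i y)
  rw [move (x+y), move x, move y, Dd_snoc, Dd_snoc, Dd_snoc]
  exact Dd_delta_add μ _ x y hz

lemma smul_symm {k : ℕ} (c : ℂ) (Φ : (Fin k → A) → ℂ) (h : IsTotallySymmetric Φ) :
    IsTotallySymmetric (fun a => c * Φ a) := fun σ a => by simp [h σ a]

lemma smul_multiadd {k : ℕ} (c : ℂ) (Φ : (Fin k → A) → ℂ) (h : IsMultiadditive Φ) :
    IsMultiadditive (fun a => c * Φ a) := fun i a x y => by
  simp only [h i a x y]; ring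

lemma Dd_diag_zero (μ : A → ℂ) (h0 : μ 0 = 0) {k : ℕ} :
    Dd μ (fun _ : Fin k => (0:A)) = 0 := by
  unfold Dd
  refine Finset.sum_eq_zero fun S _ => ?_
  rw [Finset.sum_const_zero, h0, mul_zero]

variable [Module ℚ A]

noncomputable def toML {k : ℕ} (Φ : (Fin k → A) → ℂ) (h : IsMultiadditive Φ) :
    MultilinearMap ℚ (fun _ : Fin k => A) ℂ where
  toFun := Φ
  map_update_add' := by
    intro dec m i x y
    have hd : dec = (fun a b => instDecidableEqFin k a b) := Subsingleton.elim _ _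
    subst hd
    exact h i m x y
  map_update_smul' := by
    intro dec m i q x
    have hd : dec = (fun a b => instDecidableEqFin k a b) := Subsingleton.elim _ _
    subst hd
    have hadd : ∀ u v : A, Φ (Function.update m i (u+v))
        = Φ (Function.update m i u) + Φ (Function.update m i v) := fun u v => h i m u v
    let F : A →+ ℂ := AddMonoidHom.mk' (fun u => Φ (Function.update m i u)) hadd
    exact map_rat_smul F q x

lemma comb {k : ℕ} (R : Finset (Fin k)) :
    ∑ S ∈ (univ : Finset (Fin k)).powerset, (if R ⊆ S then ((-1:ℂ))^(k - S.card) else 0)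
      = if R = univ then 1 else 0 := by
  classical
  rw [← Finset.sum_filter]
  have step1 : ∑ S ∈ (univ : Finset (Fin k)).powerset.filter (fun S => R ⊆ S),
      ((-1:ℂ))^(k - S.card)
      = ∑ T ∈ Rᶜ.powerset, ((-1:ℂ))^(k - R.card - T.card) := by
    refine Finset.sum_nbij' (fun S => S \ R) (fun T => T ∪ R) ?_ ?_ ?_ ?_ ?_
    · intro S hS
      rw [Finset.mem_filter] at hS
      rw [Finset.mem_powerset]
      intro x hx
      rw [Finset.mem_sdiff] at hx
      simp [hx.2]
    · intro T hT
      rw [Finset.mem_powerset] at hT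
      rw [Finset.mem_filter]
      exact ⟨Finset.mem_powerset.2 (Finset.subset_univ _), Finset.subset_union_right⟩
    · intro S hS
      rw [Finset.mem_filter] at hS
      show S \ R ∪ R = S
      rw [Finset.sdiff_union_of_subset hS.2]
    · intro T hT
      rw [Finset.mem_powerset] at hT
      show (T ∪ R) \ R = T
      rw [Finset.union_sdiff_right]
      exact Finset.sdiff_eq_self_of_disjoint (Finset.disjoint_left.2
        (fun x hx => by have := hT hx; simp at this; exact this))
    · intro S hS
      rw [Finset.mem_filter] at hS
      have h1 : R.card ≤ S.card := Finset.card_le_card hS.2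
      have h2 : S.card ≤ k := by
        have := Finset.card_le_card (Finset.mem_powerset.1 hS.1)
        simpa using this
      rw [Finset.card_sdiff_of_subset hS.2]
      congr 1
      omega
  rw [step1]
  have hm : Rᶜ.card = k - R.card := by
    rw [Finset.card_compl, Fintype.card_fin]
  have step2 : ∑ T ∈ Rᶜ.powerset, ((-1:ℂ))^(k - R.card - T.card)
      = ((-1:ℂ))^(k - R.card) * ∑ T ∈ Rᶜ.powerset, ((-1:ℂ))^(T.card) := by
    rw [Finset.mul_sum]
    refine Finset.sum_congr rfl ?_
    intro T hT
    rw [Finset.mem_powerset] at hT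
    have := Finset.card_le_card hT
    rw [hm] at this
    exact neg_one_pow_nat_sub _ _ this
  rw [step2]
  have step3 : ∑ T ∈ Rᶜ.powerset, ((-1:ℂ))^(T.card)
      = if Rᶜ = ∅ then 1 else 0 := by
    have := Finset.sum_powerset_neg_one_pow_card (α := Fin k) (x := Rᶜ)
    have h2 := congrArg (fun z : ℤ => (z : ℂ)) this
    push_cast at h2
    simpa using h2
  rw [step3]
  by_cases hR : R = univ
  · subst hR
    simp
  · rw [if_neg hR, if_neg (fun hc => hR (by simpa [Finset.compl_eq_empty_iff] using hc)), mul_zero]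

lemma Dd_diag {k : ℕ} (Φ : (Fin k → A) → ℂ) (hs : IsTotallySymmetric Φ)
    (hm : IsMultiadditive Φ) (a : Fin k → A) :
    Dd (fun x => Φ (fun _ => x)) a = (k.factorial : ℂ) * Φ a := by
  classical
  have expand : ∀ S : Finset (Fin k), Φ (fun _ => ∑ i ∈ S, a i)
      = ∑ r ∈ Fintype.piFinset (fun _ : Fin k => S), Φ (fun t => a (r t)) :=
    fun S => (toML Φ hm).map_sum_finset (fun _ j => a j) (fun _ => S)
  unfold Dd
  simp only [expand, Finset.mul_sum]
  have step : ∀ S ∈ (univ : Finset (Fin k)).powerset,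
      ∑ r ∈ Fintype.piFinset (fun _ : Fin k => S),
        ((-1:ℂ))^(k - S.card) * Φ (fun t => a (r t))
      = ∑ r ∈ (univ : Finset (Fin k → Fin k)),
          (if Finset.image r univ ⊆ S then ((-1:ℂ))^(k - S.card) else 0) * Φ (fun t => a (r t)) := by
    intro S _
    have hset : Fintype.piFinset (fun _ : Fin k => S)
        = (univ : Finset (Fin k → Fin k)).filter (fun r => Finset.image r univ ⊆ S) := by
      ext r
      simp [Fintype.mem_piFinset, Finset.image_subset_iff]
    rw [hset, Finset.sum_filter]
    refine Finset.sum_congr rfl fun r _ => ?_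
    by_cases h : Finset.image r univ ⊆ S <;> simp [h]
  rw [Finset.sum_congr rfl step, Finset.sum_comm]
  have inner : ∀ r : Fin k → Fin k,
      ∑ S ∈ (univ : Finset (Fin k)).powerset,
        (if Finset.image r univ ⊆ S then ((-1:ℂ))^(k - S.card) else 0) * Φ (fun t => a (r t))
      = (if Finset.image r univ = univ then 1 else 0) * Φ (fun t => a (r t)) := by
    intro r
    rw [← Finset.sum_mul, comb]
  rw [Finset.sum_congr rfl (fun r _ => inner r)]
  have step4 : ∑ r ∈ (univ : Finset (Fin k → Fin k)),
      (if Finset.image r univ = univ then 1 else 0) * Φ (fun t => a (r t))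
      = ∑ r ∈ (univ : Finset (Fin k → Fin k)).filter (fun r => Finset.image r univ = univ),
          Φ (fun t => a (r t)) := by
    rw [Finset.sum_filter]
    refine Finset.sum_congr rfl fun r _ => ?_
    by_cases h : Finset.image r univ = univ <;> simp [h]
  rw [step4]
  have step5 : ∑ r ∈ (univ : Finset (Fin k → Fin k)).filter (fun r => Finset.image r univ = univ),
      Φ (fun t => a (r t)) = ∑ σ : Equiv.Perm (Fin k), Φ (fun t => a (σ t)) := by
    refine (Finset.sum_bij
      (i := fun (σ : Equiv.Perm (Fin k)) (_ : σ ∈ (univ : Finset (Equiv.Perm (Fin k)))) =>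
        (σ : Fin k → Fin k)) ?_ ?_ ?_ ?_).symm
    · intro σ _
      rw [Finset.mem_filter]
      refine ⟨Finset.mem_univ _, ?_⟩
      refine Finset.eq_univ_of_forall fun y => ?_
      exact Finset.mem_image.2 ⟨σ.symm y, Finset.mem_univ _, σ.apply_symm_apply y⟩
    · intro σ1 _ σ2 _ h
      exact Equiv.coe_fn_injective h
    · intro r hr
      rw [Finset.mem_filter] at hr
      have hsurj : Function.Surjective r := by
        intro y
        have : y ∈ Finset.image r univ := by rw [hr.2]; exact Finset.mem_univ y
        obtain ⟨x, _, hx⟩ := Finset.mem_image.1 this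
        exact ⟨x, hx⟩
      have hbij : Function.Bijective r := Finite.surjective_iff_bijective.1 hsurj
      exact ⟨Equiv.ofBijective r hbij, Finset.mem_univ _, rfl⟩
    · intro σ _; rfl
  rw [step5]
  have step6 : ∀ σ : Equiv.Perm (Fin k), Φ (fun t => a (σ t)) = Φ a :=
    fun σ => hs σ a
  rw [Finset.sum_congr rfl (fun σ _ => step6 σ)]
  rw [Finset.sum_const, Finset.card_univ, Fintype.card_perm]
  simp [nsmul_eq_mul]

lemma one_dim (μ : A → ℂ) (h0 : μ 0 = 0) (hz : ∀ a : Fin 1 → A, Dd μ a = 0) (x : A) :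
    μ x = 0 := by
  have h := hz (fun _ => x)
  unfold Dd at h
  rw [show (univ : Finset (Fin 1)).powerset = {∅, {0}} from rfl,
    Finset.sum_insert (by decide), Finset.sum_singleton] at h
  simp [h0] at h
  exact h

lemma exists_decomp (n : ℕ) : ∀ (μ : A → ℂ), μ 0 = 0 →
    (∀ a : Fin (n+1) → A, Dd μ a = 0) →
    ∃ Φ : (j : ℕ) → (Fin (j+1) → A) → ℂ,
      (∀ j < n, IsTotallySymmetric (Φ j) ∧ IsMultiadditive (Φ j)) ∧
      ∀ x : A, μ x = ∑ j ∈ Finset.range n, Φ j (fun _ => x) := by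
  induction n with
  | zero =>
    intro μ h0 hz
    exact ⟨fun _ _ => 0, fun j hj => absurd hj (Nat.not_lt_zero j),
      fun x => by simpa using one_dim μ h0 hz x⟩
  | succ n ih =>
    intro μ h0 hz
    have hΨs : IsTotallySymmetric (fun a : Fin (n+1) → A =>
        (1/((n+1).factorial : ℂ)) * Dd μ a) :=
      smul_symm _ _ (fun σ a => Dd_perm μ σ a)
    have hΨm : IsMultiadditive (fun a : Fin (n+1) → A =>
        (1/((n+1).factorial : ℂ)) * Dd μ a) :=
      smul_multiadd _ _ (Dd_multiadd μ hz)
    set Ψ : (Fin (n+1) → A) → ℂ := fun a => (1/((n+1).factorial : ℂ)) * Dd μ a with hΨ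
    set μ' : A → ℂ := fun x => μ x - Ψ (fun _ => x) with hμ'
    have hfac : ((n+1).factorial : ℂ) ≠ 0 := by
      exact_mod_cast Nat.cast_ne_zero.2 (Nat.factorial_ne_zero (n+1))
    have h0' : μ' 0 = 0 := by
      simp only [hμ', h0, hΨ]
      rw [Dd_diag_zero μ h0]
      simp
    have hz' : ∀ a : Fin (n+1) → A, Dd μ' a = 0 := by
      intro a
      have hsub : Dd μ' a = Dd μ a - Dd (fun x => Ψ (fun _ => x)) a :=
        Dd_sub μ (fun x => Ψ (fun _ => x)) a
      rw [hsub, Dd_diag Ψ hΨs hΨm a, hΨ]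
      field_simp
      ring
    obtain ⟨Φ', hprops, hdec⟩ := ih μ' h0' hz'
    set Φn : (j : ℕ) → (Fin (j+1) → A) → ℂ :=
      fun j => if h : j = n then (fun a => Ψ (a ∘ Fin.cast (by omega))) else Φ' j with hΦn
    have hn : ∀ a : Fin (n+1) → A, Φn n a = Ψ a := by
      intro a
      have h1 : Φn n = fun a : Fin (n+1) → A => Ψ (a ∘ Fin.cast (by omega : n+1 = n+1)) :=
        dif_pos rfl
      rw [h1]
      exact congrArg Ψ (funext fun i => congrArg a (Fin.ext rfl))
    have hj' : ∀ j, j ≠ n → Φn j = Φ' j := fun j hjn => dif_neg hjn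
    refine ⟨Φn, ?_, ?_⟩
    · intro j hj
      by_cases hjn : j = n
      · subst hjn
        constructor
        · intro σ a
          rw [hn, hn]
          exact hΨs σ a
        · intro i a x y
          rw [hn, hn, hn]
          exact hΨm i a x y
      · rw [hj' j hjn]
        exact hprops j (by omega)
    · intro x
      rw [Finset.sum_range_succ]
      have h1 : ∀ j ∈ Finset.range n, Φn j (fun _ => x) = Φ' j (fun _ => x) := by
        intro j hj
        rw [hj' j (by rw [Finset.mem_range] at hj; omega)]
      rw [Finset.sum_congr rfl h1, hn, ← hdec x]
      show μ x = (μ x - Ψ (fun _ => x)) + Ψ (fun _ => x)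
      ring

lemma scalar_diag {k : ℕ} (Φ : (Fin k → A) → ℂ) (hm : IsMultiadditive Φ) (q : ℚ) (x : A) :
    Φ (fun _ => q • x) = (q:ℂ)^k * Φ (fun _ => x) := by
  have h := (toML Φ hm).map_smul_univ (fun _ : Fin k => q) (fun _ => x)
  simp only [Finset.prod_const, Finset.card_univ, Fintype.card_fin] at h
  have h2 : (toML Φ hm) (fun _ => q • x) = Φ (fun _ => q • x) := rfl
  have h3 : (toML Φ hm) (fun _ => x) = Φ (fun _ => x) := rfl
  rw [h2, h3] at h
  rw [h]
  rw [Rat.smul_def]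
  push_cast
  ring

lemma coeff_zero (n : ℕ) (c : Fin n → ℂ)
    (h : ∀ q : ℚ, ∑ j : Fin n, c j * (q:ℂ)^(j.1+1) = 0) : ∀ j, c j = 0 := by
  classical
  set P : Polynomial ℂ := ∑ j : Fin n, Polynomial.C (c j) * Polynomial.X^(j.1+1) with hP
  have hev : ∀ q : ℚ, P.IsRoot (q:ℂ) := by
    intro q
    unfold Polynomial.IsRoot
    rw [hP, Polynomial.eval_finset_sum]
    simpa using h q
  have hP0 : P = 0 := by
    refine Polynomial.eq_zero_of_infinite_isRoot P ?_
    exact Set.infinite_of_injective_forall_mem (f := fun q : ℚ => (q:ℂ))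
      Rat.cast_injective (fun q => hev q)
  intro j
  have hc := congrArg (fun p : Polynomial ℂ => p.coeff (j.1+1)) hP0
  simp only [hP, Polynomial.finset_sum_coeff, Polynomial.coeff_zero] at hc
  rw [Finset.sum_eq_single j] at hc
  · simpa [Polynomial.coeff_C_mul, Polynomial.coeff_X_pow] using hc
  · intro j' _ hj'
    have : ¬ (j.1 + 1 = j'.1 + 1) := by
      intro hcon
      exact hj' (Fin.ext (by omega))
    simp [Polynomial.coeff_C_mul, Polynomial.coeff_X_pow, this]
    exact fun hc => absurd (Fin.ext hc).symm hj'
  · intro hj; exact absurd (Finset.mem_univ j) hj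

lemma unique_decomp (n : ℕ) (Φ Ψ : (j : Fin n) → (Fin (j.1+1) → A) → ℂ)
    (hΦ : ∀ j, IsTotallySymmetric (Φ j) ∧ IsMultiadditive (Φ j))
    (hΨ : ∀ j, IsTotallySymmetric (Ψ j) ∧ IsMultiadditive (Ψ j))
    (h : ∀ x : A, ∑ j, Φ j (fun _ => x) = ∑ j, Ψ j (fun _ => x)) : Φ = Ψ := by
  have hdiag : ∀ (j : Fin n) (x : A), Φ j (fun _ => x) = Ψ j (fun _ => x) := by
    intro j x
    have key : ∀ q : ℚ,
        ∑ j' : Fin n, (Φ j' (fun _ => x) - Ψ j' (fun _ => x)) * (q:ℂ)^(j'.1+1) = 0 := by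
      intro q
      have h1 := h (q • x)
      have h2 : ∀ j' : Fin n, Φ j' (fun _ => q • x)
          = (q:ℂ)^(j'.1+1) * Φ j' (fun _ => x) := fun j' => scalar_diag _ (hΦ j').2 q x
      have h3 : ∀ j' : Fin n, Ψ j' (fun _ => q • x)
          = (q:ℂ)^(j'.1+1) * Ψ j' (fun _ => x) := fun j' => scalar_diag _ (hΨ j').2 q x
      rw [Finset.sum_congr rfl (fun j' _ => h2 j'), Finset.sum_congr rfl (fun j' _ => h3 j')]
        at h1
      rw [← sub_eq_zero] at h1
      rw [← h1, ← Finset.sum_sub_distrib]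
      refine Finset.sum_congr rfl fun j' _ => ?_
      ring
    exact sub_eq_zero.1 (coeff_zero n (fun j' => Φ j' (fun _ => x) - Ψ j' (fun _ => x)) key j)
  funext j a
  have e1 := Dd_diag (Φ j) (hΦ j).1 (hΦ j).2 a
  have e2 := Dd_diag (Ψ j) (hΨ j).1 (hΨ j).2 a
  have e3 : Dd (fun x => Φ j (fun _ => x)) a = Dd (fun x => Ψ j (fun _ => x)) a :=
    congrArg (fun f : A → ℂ => Dd f a) (funext fun x => hdiag j x)
  rw [e1, e2] at e3
  have hfac : ((j.1+1).factorial : ℂ) ≠ 0 := Nat.cast_ne_zero.2 (Nat.factorial_ne_zero _)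
  exact mul_left_cancel₀ hfac e3


end QMaux

/-- For `n ≥ 2`, every `μ ∈ 𝓜_n(A)` is a polynomial of degree at most `n` in additive
functionals: there are uniquely determined `Φ_j ∈ Σ_j(A)` (`j = 1,…,n`, indexed here by
`j : Fin n` with `Φ j` of arity `j + 1`), each totally symmetric and additive in every
argument, with `μ(x) = Σ_{j=1}^{n} Φ_j(x,…,x)` for all `x`. -/
theorem memMeasureSpace_polynomial_decomposition {A : Type*} [AddCommGroup A] [Module ℚ A]
    (n : ℕ) (hn : 2 ≤ n) (μ : A → ℂ) (hμ : MemMeasureSpace n μ) :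
    ∃! Φ : (j : Fin n) → (Fin (j.1 + 1) → A) → ℂ,
      (∀ j : Fin n, IsTotallySymmetric (Φ j) ∧ IsMultiadditive (Φ j)) ∧
      ∀ x : A, μ x = ∑ j : Fin n, Φ j (fun _ => x) := by
  obtain ⟨Φ, hprops, hdec⟩ := QMaux.exists_decomp n μ (QMaux.memA hμ) (fun a => QMaux.memB hμ a)
  refine ⟨fun j => Φ j.1, ⟨fun j => hprops j.1 j.2, fun x => ?_⟩, ?_⟩
  · exact (hdec x).trans (Fin.sum_univ_eq_sum_range (fun j => Φ j (fun _ => x)) n).symm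
  · rintro Φ₂ ⟨hp₂, hd₂⟩
    refine QMaux.unique_decomp n Φ₂ (fun j => Φ j.1) hp₂ (fun j => hprops j.1 j.2) ?_
    intro x
    calc ∑ j : Fin n, Φ₂ j (fun _ => x) = μ x := (hd₂ x).symm
      _ = ∑ j : Fin n, Φ j.1 (fun _ => x) :=
        (hdec x).trans (Fin.sum_univ_eq_sum_range (fun j => Φ j (fun _ => x)) n).symm
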